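/- On R^6 with the Poisson brackets of A_{6,1} (P, P' as given: P^{14}=p14, P^{23}=p23, P^{34}=p34+p14 x2, P^{36}=p36, P^{46}=-p14 x5, P^{56}=p56; P'^{14}=c44 p14 x4/p34, P'^{23}=b32 x2, P'^{34}=c44 x4 + c44 p14 x2 x4/p34, P'^{46}=-c44 p14 x4 x5/p34, P'^{56}=e65 x5), assume p14 p23 p34 p56 ≠ 0. Then the three functions H1 = b32 x2/p23 + c44 x4/p34 + e65 x5/p56, H2 = (1/2)((b32 x2/p23)^2 + (c44 x4/p34)^2 + (e65 x5/p56)^2), H3 = (1/3)((b32 x2/p23)^3 + (c44 x4/p34)^3 + (e65 x5/p56)^3) are pairwise in involution with respect to both brackets: {Hi,Hj} = {Hi,Hj}' = 0 for all i,j. -/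

import Mathlib

open scoped BigOperators

noncomputable def pd {m : ℕ} (μ : Fin m) (f : (Fin m → ℝ) → ℝ) (x : Fin m → ℝ) : ℝ :=
  fderiv ℝ f x (Pi.single μ 1)

/-- Poisson bracket associated to a bivector field `P`. -/
noncomputable def pbrk {m : ℕ} (P : (Fin m → ℝ) → Fin m → Fin m → ℝ)
    (f g : (Fin m → ℝ) → ℝ) (x : Fin m → ℝ) : ℝ :=
  ∑ μ, ∑ ν, P x μ ν * pd μ f x * pd ν g x

/-- Schouten bracket `[P,P]^{λμν}`. -/
noncomputable def schouten {m : ℕ} (P : (Fin m → ℝ) → Fin m → Fin m → ℝ)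
    (l μ ν : Fin m) (x : Fin m → ℝ) : ℝ :=
  ∑ ρ, (P x ρ l * pd ρ (fun y => P y μ ν) x
      + P x ρ ν * pd ρ (fun y => P y l μ) x
      + P x ρ μ * pd ρ (fun y => P y ν l) x)

/-- Mixed Schouten bracket `[P,Q]^{λμν}`. -/
noncomputable def schoutenMixed {m : ℕ} (P Q : (Fin m → ℝ) → Fin m → Fin m → ℝ)
    (l μ ν : Fin m) (x : Fin m → ℝ) : ℝ :=
  ∑ ρ, (P x ρ l * pd ρ (fun y => Q y μ ν) x + Q x ρ l * pd ρ (fun y => P y μ ν) x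
      + P x ρ ν * pd ρ (fun y => Q y l μ) x + Q x ρ ν * pd ρ (fun y => P y l μ) x
      + P x ρ μ * pd ρ (fun y => Q y ν l) x + Q x ρ μ * pd ρ (fun y => P y ν l) x)

/-- The Poisson bivector `P` on the nilpotent group `A_{6,1}`. -/
noncomputable def P61 (p14 p23 p34 p36 p56 : ℝ) : (Fin 6 → ℝ) → Fin 6 → Fin 6 → ℝ :=
  fun x μ ν =>
    let C := p34 + p14 * x 1
    let D := -(p14 * x 4)
    !![0, 0, 0, p14, 0, 0;
       0, 0, p23, 0, 0, 0;
       0, -p23, 0, C, 0, p36;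
       -p14, 0, -C, 0, 0, D;
       0, 0, 0, 0, 0, p56;
       0, 0, -p36, -D, -p56, 0] μ ν

/-- The Poisson bivector `P'` on the nilpotent group `A_{6,1}`. -/
noncomputable def P61' (p14 p34 b32 c44 e65 : ℝ) : (Fin 6 → ℝ) → Fin 6 → Fin 6 → ℝ :=
  fun x μ ν =>
    let A := c44 * p14 * x 3 / p34
    let B := b32 * x 1
    let C := c44 * x 3 + c44 * p14 * x 1 * x 3 / p34
    let D := -(c44 * p14 * x 3 * x 4 / p34)
    let E := e65 * x 4
    !![0, 0, 0, A, 0, 0;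
       0, 0, B, 0, 0, 0;
       0, -B, 0, C, 0, 0;
       -A, 0, -C, 0, 0, D;
       0, 0, 0, 0, 0, E;
       0, 0, 0, -D, -E, 0] μ ν

lemma pd3 (a b c : ℝ) (n : ℕ) (μ : Fin 6) (x : Fin 6 → ℝ) :
    pd μ (fun y : Fin 6 → ℝ => a * (y 1) ^ n + b * (y 3) ^ n + c * (y 4) ^ n) x =
      (if (1 : Fin 6) = μ then a * n * (x 1) ^ (n - 1) else 0)
      + (if (3 : Fin 6) = μ then b * n * (x 3) ^ (n - 1) else 0)
      + (if (4 : Fin 6) = μ then c * n * (x 4) ^ (n - 1) else 0) := by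
  have key : ∀ (k : Fin 6) (e : ℝ), HasFDerivAt (fun y : Fin 6 → ℝ => e * (y k) ^ n)
      ((e * n * (x k) ^ (n - 1)) • ContinuousLinearMap.proj (R := ℝ) (φ := fun _ : Fin 6 => ℝ) k) x := by
    intro k e
    have h1 : HasDerivAt (fun t : ℝ => e * t ^ n) (e * n * (x k) ^ (n - 1)) (x k) := by
      simpa [mul_assoc] using (hasDerivAt_pow n (x k)).const_mul e
    have h2 : HasFDerivAt (fun y : Fin 6 → ℝ => y k)
        (ContinuousLinearMap.proj (R := ℝ) (φ := fun _ : Fin 6 => ℝ) k) x :=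
      (ContinuousLinearMap.proj (R := ℝ) (φ := fun _ : Fin 6 => ℝ) k).hasFDerivAt
    have h3 := h1.comp_hasFDerivAt x h2
    exact h3
  have h := ((key 1 a).add (key 3 b)).add (key 4 c)
  rw [pd, show (fun y : Fin 6 → ℝ => a * (y 1) ^ n + b * (y 3) ^ n + c * (y 4) ^ n) =
      ((fun y : Fin 6 → ℝ => a * (y 1) ^ n) + (fun y : Fin 6 → ℝ => b * (y 3) ^ n)) +
        (fun y : Fin 6 → ℝ => c * (y 4) ^ n) from rfl, h.fderiv]
  simp [ContinuousLinearMap.proj, Pi.single_apply]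

theorem A61_bi_involution (p14 p23 p34 p36 p56 b32 c44 e65 : ℝ)
    (hne : p14 * p23 * p34 * p56 ≠ 0) :
    let u : (Fin 6 → ℝ) → ℝ := fun x => b32 * x 1 / p23
    let v : (Fin 6 → ℝ) → ℝ := fun x => c44 * x 3 / p34
    let w : (Fin 6 → ℝ) → ℝ := fun x => e65 * x 4 / p56
    let H : Fin 3 → (Fin 6 → ℝ) → ℝ :=
      ![fun x => u x + v x + w x,
        fun x => (1 / 2) * ((u x) ^ 2 + (v x) ^ 2 + (w x) ^ 2),
        fun x => (1 / 3) * ((u x) ^ 3 + (v x) ^ 3 + (w x) ^ 3)]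
    ∀ i j : Fin 3, ∀ x,
      pbrk (P61 p14 p23 p34 p36 p56) (H i) (H j) x = 0 ∧
      pbrk (P61' p14 p34 b32 c44 e65) (H i) (H j) x = 0 := by
  intro u v w H i j x
  have hform : ∀ k : Fin 3, ∃ a b c : ℝ, ∃ n : ℕ,
      H k = fun y : Fin 6 → ℝ => a * (y 1) ^ n + b * (y 3) ^ n + c * (y 4) ^ n := by
    intro k
    fin_cases k
    · refine ⟨b32 / p23, c44 / p34, e65 / p56, 1, ?_⟩
      funext y
      show b32 * y 1 / p23 + c44 * y 3 / p34 + e65 * y 4 / p56 = _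
      ring
    · refine ⟨(b32 / p23) ^ 2 / 2, (c44 / p34) ^ 2 / 2, (e65 / p56) ^ 2 / 2, 2, ?_⟩
      funext y
      show (1 / 2) * ((b32 * y 1 / p23) ^ 2 + (c44 * y 3 / p34) ^ 2 + (e65 * y 4 / p56) ^ 2) = _
      ring
    · refine ⟨(b32 / p23) ^ 3 / 3, (c44 / p34) ^ 3 / 3, (e65 / p56) ^ 3 / 3, 3, ?_⟩
      funext y
      show (1 / 3) * ((b32 * y 1 / p23) ^ 3 + (c44 * y 3 / p34) ^ 3 + (e65 * y 4 / p56) ^ 3) = _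
      ring
  obtain ⟨a, b, c, n, hf⟩ := hform i
  obtain ⟨a', b', c', n', hg⟩ := hform j
  rw [hf, hg]
  constructor <;>
    simp [pbrk, Fin.sum_univ_six, pd3, P61, P61', Matrix.vecHead, Matrix.vecTail]
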